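/- Let (Ω, Pr) be a probability space, let ε, δ be reals with 0 < ε < 1 and 0 < δ < 1, and let X₁, …, X_N be independent identically distributed random variables taking values in [0,1] with common mean μ > 0 and variance σ². Set ρ = max(σ², ε·μ). If N ≥ 4(e−2)·ln(2/δ)·ρ/(ε·μ)², then Pr[ μ(1−ε) ≤ (X₁ + ⋯ + X_N)/N ≤ μ(1+ε) ] ≥ 1 − δ. -/

import Mathlib

open MeasureTheory ProbabilityTheory

lemma exp_series' (x : ℝ) : Real.exp x = ∑' n : ℕ, x ^ n / n.factorial := by
  rw [Real.exp_eq_exp_ℝ, NormedSpace.exp_eq_tsum_div]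

set_option maxHeartbeats 1000000 in
lemma exp_le_quad' {z : ℝ} (hz : |z| ≤ 1) :
    Real.exp z ≤ 1 + z + (Real.exp 1 - 2) * z ^ 2 := by
  have hshift : ∀ x : ℝ, Real.exp x = 1 + x + ∑' n : ℕ, x ^ (n + 2) / (n + 2).factorial := by
    intro x
    have h0 := Real.summable_pow_div_factorial x
    have h1 : Summable (fun n : ℕ => x ^ (n + 1) / (n + 1).factorial) :=
      (summable_nat_add_iff 1).2 h0
    rw [exp_series' x, Summable.tsum_eq_zero_add h0, Summable.tsum_eq_zero_add h1]
    simp [Nat.factorial]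
    ring
  have hz2 : ∀ n : ℕ, z ^ (n + 2) ≤ z ^ 2 := by
    intro n
    calc z ^ (n + 2) ≤ |z| ^ (n + 2) := by rw [← abs_pow]; exact le_abs_self _
      _ = |z| ^ 2 * |z| ^ n := by ring
      _ ≤ |z| ^ 2 * 1 := by
          have : |z| ^ n ≤ 1 := pow_le_one₀ (abs_nonneg z) hz
          nlinarith [sq_nonneg (|z|)]
      _ = z ^ 2 := by rw [mul_one, sq_abs]
  have hsz : Summable (fun n : ℕ => z ^ (n + 2) / (n + 2).factorial) :=
    (summable_nat_add_iff 2).2 (Real.summable_pow_div_factorial z)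
  have hs1 : Summable (fun n : ℕ => (1 : ℝ) ^ (n + 2) / (n + 2).factorial) :=
    (summable_nat_add_iff 2).2 (Real.summable_pow_div_factorial 1)
  have hs1' : Summable (fun n : ℕ => (1 : ℝ) ^ (n + 2) / (n + 2).factorial * z ^ 2) :=
    hs1.mul_right _
  have he : Real.exp 1 - 2 = ∑' n : ℕ, (1 : ℝ) ^ (n + 2) / (n + 2).factorial := by
    have := hshift 1; linarith
  have htsum : (∑' n : ℕ, z ^ (n + 2) / (n + 2).factorial)
      ≤ (Real.exp 1 - 2) * z ^ 2 := by
    rw [he, ← tsum_mul_right]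
    refine Summable.tsum_le_tsum (fun n => ?_) hsz ?_
    · rw [one_pow, div_mul_eq_mul_div, one_mul]
      have hf : (0:ℝ) < ((n+2).factorial : ℝ) := by positivity
      exact (div_le_div_iff_of_pos_right hf).2 (hz2 n)
    · simpa using hs1'
  rw [hshift z]
  linarith

lemma mgf_le_of_bounded' {Ω : Type*} [MeasurableSpace Ω] (P : Measure Ω)
    [IsProbabilityMeasure P] (Y : Ω → ℝ) (hY : Measurable Y) (hbdd : ∀ ω, |Y ω| ≤ 1)
    (hmean : ∫ ω, Y ω ∂P = 0) (v : ℝ) (hv : ∫ ω, (Y ω) ^ 2 ∂P ≤ v)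
    {t : ℝ} (ht0 : 0 ≤ t) (ht1 : t ≤ 1) :
    mgf Y P t ≤ Real.exp ((Real.exp 1 - 2) * t ^ 2 * v) := by
  have hc : (0:ℝ) < Real.exp 1 - 2 := by
    have := Real.exp_one_gt_d9; norm_num at this ⊢; linarith
  have hYint : Integrable Y P := by
    refine (integrable_const (1:ℝ)).mono' hY.aestronglyMeasurable ?_
    exact Filter.Eventually.of_forall fun ω => by simpa using hbdd ω
  have hY2int : Integrable (fun ω => (Y ω) ^ 2) P := by
    refine (integrable_const (1:ℝ)).mono' (hY.pow_const 2).aestronglyMeasurable ?_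
    refine Filter.Eventually.of_forall fun ω => ?_
    have := hbdd ω
    rw [Real.norm_eq_abs, abs_pow]
    nlinarith [abs_nonneg (Y ω)]
  have hexpint : Integrable (fun ω => Real.exp (t * Y ω)) P := by
    refine (integrable_const (Real.exp 1)).mono'
      ((hY.const_mul t).exp).aestronglyMeasurable ?_
    refine Filter.Eventually.of_forall fun ω => ?_
    rw [Real.norm_eq_abs, abs_of_pos (Real.exp_pos _), Real.exp_le_exp]
    have h1 := hbdd ω
    have : t * Y ω ≤ t * |Y ω| := by nlinarith [le_abs_self (Y ω)]
    nlinarith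
  have hpt : ∀ ω, Real.exp (t * Y ω)
      ≤ 1 + t * Y ω + (Real.exp 1 - 2) * t ^ 2 * (Y ω) ^ 2 := by
    intro ω
    have habs : |t * Y ω| ≤ 1 := by
      rw [abs_mul, abs_of_nonneg ht0]
      have := hbdd ω
      nlinarith
    have := exp_le_quad' habs
    calc Real.exp (t * Y ω) ≤ 1 + t * Y ω + (Real.exp 1 - 2) * (t * Y ω) ^ 2 := this
      _ = 1 + t * Y ω + (Real.exp 1 - 2) * t ^ 2 * (Y ω) ^ 2 := by ring
  have hint : Integrable (fun ω => 1 + t * Y ω + (Real.exp 1 - 2) * t ^ 2 * (Y ω) ^ 2) P :=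
    ((integrable_const 1).add (hYint.const_mul t)).add (hY2int.const_mul _)
  calc mgf Y P t = ∫ ω, Real.exp (t * Y ω) ∂P := rfl
    _ ≤ ∫ ω, (1 + t * Y ω + (Real.exp 1 - 2) * t ^ 2 * (Y ω) ^ 2) ∂P :=
        integral_mono hexpint hint hpt
    _ = 1 + t * (∫ ω, Y ω ∂P) + (Real.exp 1 - 2) * t ^ 2 * ∫ ω, (Y ω) ^ 2 ∂P := by
        have h1 : Integrable (fun ω => 1 + t * Y ω) P := by
          simpa using (integrable_const (1:ℝ)).add (hYint.const_mul t)
        rw [integral_add h1 (hY2int.const_mul _),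
          integral_add (integrable_const 1) (hYint.const_mul t),
          integral_const_mul, integral_const_mul, integral_const]
        simp
    _ = 1 + (Real.exp 1 - 2) * t ^ 2 * ∫ ω, (Y ω) ^ 2 ∂P := by rw [hmean]; ring
    _ ≤ 1 + (Real.exp 1 - 2) * t ^ 2 * v := by
        nlinarith [mul_le_mul_of_nonneg_left hv (mul_nonneg hc.le (sq_nonneg t))]
    _ ≤ Real.exp ((Real.exp 1 - 2) * t ^ 2 * v) := by
        have := Real.add_one_le_exp ((Real.exp 1 - 2) * t ^ 2 * v); linarith

lemma tail_le' {Ω : Type*} [MeasurableSpace Ω] (P : Measure Ω)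
    [IsProbabilityMeasure P] {N : ℕ} (Y : Fin N → Ω → ℝ) (hmeas : ∀ i, Measurable (Y i))
    (hindep : iIndepFun Y P)
    (hbdd : ∀ i ω, |Y i ω| ≤ 1) (hmean : ∀ i, ∫ ω, Y i ω ∂P = 0)
    (v : ℝ) (hv : ∀ i, ∫ ω, (Y i ω) ^ 2 ∂P ≤ v)
    {t : ℝ} (ht0 : 0 ≤ t) (ht1 : t ≤ 1) (a : ℝ) :
    (P {ω | a ≤ ∑ i, Y i ω}).toReal
      ≤ Real.exp (-t * a + N * ((Real.exp 1 - 2) * t ^ 2 * v)) := by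
  have hexpint : ∀ i, Integrable (fun ω => Real.exp (t * Y i ω)) P := by
    intro i
    refine (integrable_const (Real.exp 1)).mono'
      (((hmeas i).const_mul t).exp).aestronglyMeasurable ?_
    refine Filter.Eventually.of_forall fun ω => ?_
    rw [Real.norm_eq_abs, abs_of_pos (Real.exp_pos _), Real.exp_le_exp]
    have h1 := hbdd i ω
    have : t * Y i ω ≤ t * |Y i ω| := by nlinarith [le_abs_self (Y i ω)]
    nlinarith
  have hSint : Integrable (fun ω => Real.exp (t * (∑ i, Y i) ω)) P :=
    hindep.integrable_exp_mul_sum hmeas (fun i _ => hexpint i)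
  have h := measure_ge_le_exp_mul_mgf (μ := P) (X := ∑ i, Y i) a ht0 hSint
  have hset : {ω | a ≤ ∑ i, Y i ω} = {ω | a ≤ (∑ i, Y i) ω} := by
    ext ω; simp [Finset.sum_apply]
  rw [hset]
  refine h.trans ?_
  rw [hindep.mgf_sum hmeas Finset.univ]
  have hprod : (∏ i, mgf (Y i) P t) ≤ Real.exp ((Real.exp 1 - 2) * t ^ 2 * v) ^ N := by
    calc (∏ i, mgf (Y i) P t)
        ≤ ∏ _i : Fin N, Real.exp ((Real.exp 1 - 2) * t ^ 2 * v) :=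
          Finset.prod_le_prod (fun i _ => mgf_nonneg)
            (fun i _ => mgf_le_of_bounded' P (Y i) (hmeas i) (hbdd i) (hmean i) v (hv i) ht0 ht1)
      _ = Real.exp ((Real.exp 1 - 2) * t ^ 2 * v) ^ N := by
          rw [Finset.prod_const, Finset.card_univ, Fintype.card_fin]
  calc Real.exp (-t * a) * ∏ i, mgf (Y i) P t
      ≤ Real.exp (-t * a) * Real.exp ((Real.exp 1 - 2) * t ^ 2 * v) ^ N := by
        exact mul_le_mul_of_nonneg_left hprod (Real.exp_pos _).le
    _ = Real.exp (-t * a + N * ((Real.exp 1 - 2) * t ^ 2 * v)) := by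
        rw [← Real.exp_nat_mul, ← Real.exp_add]

set_option maxHeartbeats 1000000 in
/-- Generalized zero-one estimator theorem (Dagum–Karp–Luby–Ross): if `X₁, …, X_N`
are i.i.d. random variables with values in `[0,1]`, common mean `μ > 0` and variance
`σ²`, and `ρ = max(σ², ε·μ)`, then `N ≥ 4(e−2)·ln(2/δ)·ρ/(ε·μ)²` samples suffice for
the empirical mean to be an `(ε,δ)`-approximation of `μ`, i.e. it lies in
`[μ(1−ε), μ(1+ε)]` with probability at least `1−δ`. -/
theorem zero_one_estimator {Ω : Type*} [MeasurableSpace Ω] (P : Measure Ω)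
    [IsProbabilityMeasure P] (ε δ : ℝ) (hε0 : 0 < ε) (hε1 : ε < 1)
    (hδ0 : 0 < δ) (hδ1 : δ < 1) (N : ℕ) (hN : 0 < N)
    (X : Fin N → Ω → ℝ) (hmeas : ∀ i, Measurable (X i))
    (hindep : iIndepFun X P)
    (hident : ∀ i, IdentDistrib (X i) (X ⟨0, hN⟩) P P)
    (hrange : ∀ i ω, X i ω ∈ Set.Icc (0 : ℝ) 1)
    (μ : ℝ) (hμ : μ = ∫ ω, X ⟨0, hN⟩ ω ∂P) (hμpos : 0 < μ)
    (σ2 : ℝ) (hσ2 : σ2 = variance (X ⟨0, hN⟩) P)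
    (ρ : ℝ) (hρ : ρ = max σ2 (ε * μ))
    (hNbound : (N : ℝ) ≥ 4 * (Real.exp 1 - 2) * Real.log (2 / δ) * ρ / (ε * μ) ^ 2) :
    (P {ω | μ * (1 - ε) ≤ (∑ i, X i ω) / N ∧ (∑ i, X i ω) / N ≤ μ * (1 + ε)}).toReal
      ≥ 1 - δ := by
  have hc : (0:ℝ) < Real.exp 1 - 2 := by
    have := Real.exp_one_gt_d9; norm_num at this ⊢; linarith
  have hc' : (1:ℝ) ≤ 2 * (Real.exp 1 - 2) := by
    have := Real.exp_one_gt_d9; norm_num at this ⊢; linarith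
  have hεμ : 0 < ε * μ := mul_pos hε0 hμpos
  have hρεμ : ε * μ ≤ ρ := hρ ▸ le_max_right _ _
  have hσρ : σ2 ≤ ρ := hρ ▸ le_max_left _ _
  have hρpos : 0 < ρ := lt_of_lt_of_le hεμ hρεμ
  -- basic integrability and bounds
  have hXint : ∀ i, Integrable (X i) P := fun i => by
    refine (integrable_const (1:ℝ)).mono' (hmeas i).aestronglyMeasurable ?_
    refine Filter.Eventually.of_forall fun ω => ?_
    rw [Real.norm_eq_abs, abs_of_nonneg (hrange i ω).1]; exact (hrange i ω).2
  have hμ1 : μ ≤ 1 := by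
    rw [hμ]
    calc ∫ ω, X ⟨0, hN⟩ ω ∂P ≤ ∫ _ω, (1:ℝ) ∂P :=
          integral_mono (hXint _) (integrable_const 1) (fun ω => (hrange _ ω).2)
      _ = 1 := by simp
  -- the Chernoff parameter
  set c := Real.exp 1 - 2 with hcdef
  set t := ε * μ / (2 * c * ρ) with htdef
  have ht0 : 0 < t := div_pos hεμ (by positivity)
  have ht1 : t ≤ 1 := by
    rw [div_le_one (by positivity)]
    nlinarith
  -- means
  have hXmean : ∀ i, ∫ ω, X i ω ∂P = μ := fun i => by rw [hμ]; exact (hident i).integral_eq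
  have hYmean : ∀ i, ∫ ω, (X i ω - μ) ∂P = 0 := fun i => by
    rw [integral_sub (hXint i) (integrable_const μ), integral_const, hXmean i]; simp
  have hZmean : ∀ i, ∫ ω, (μ - X i ω) ∂P = 0 := fun i => by
    rw [integral_sub (integrable_const μ) (hXint i), integral_const, hXmean i]; simp
  -- bounds
  have hYbdd : ∀ i ω, |X i ω - μ| ≤ 1 := fun i ω => by
    have h := hrange i ω
    rw [abs_le]; constructor
    · linarith [h.1]
    · linarith [h.2]
  have hZbdd : ∀ i ω, |μ - X i ω| ≤ 1 := fun i ω => by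
    rw [abs_sub_comm]; exact hYbdd i ω
  -- independence of shifted variables
  have hYindep : iIndepFun (fun i ω => X i ω - μ) P :=
    hindep.comp (fun _ (x:ℝ) => x - μ) (fun _ => measurable_id.sub_const μ)
  have hZindep : iIndepFun (fun i ω => μ - X i ω) P :=
    hindep.comp (fun _ (x:ℝ) => μ - x) (fun _ => measurable_const.sub measurable_id)
  -- second moments
  have hmem : MemLp (X ⟨0, hN⟩) 2 P := by
    refine MemLp.of_bound (hmeas _).aestronglyMeasurable 1 ?_
    refine Filter.Eventually.of_forall fun ω => ?_
    rw [Real.norm_eq_abs, abs_of_nonneg (hrange _ ω).1]; exact (hrange _ ω).2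
  have hvar0 : ∫ ω, (X ⟨0, hN⟩ ω - μ) ^ 2 ∂P = σ2 := by
    rw [hσ2, variance_eq_integral hmem.aemeasurable]
    rw [hμ]
  have hYvar : ∀ i, ∫ ω, (X i ω - μ) ^ 2 ∂P ≤ σ2 := fun i => le_of_eq (by
    have hid : IdentDistrib (fun ω => (X i ω - μ) ^ 2)
        (fun ω => (X ⟨0, hN⟩ ω - μ) ^ 2) P P :=
      (hident i).comp ((measurable_id.sub_const μ).pow_const 2)
    rw [hid.integral_eq, hvar0])
  have hZvar : ∀ i, ∫ ω, (μ - X i ω) ^ 2 ∂P ≤ σ2 := fun i => by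
    have : ∀ ω, (μ - X i ω) ^ 2 = (X i ω - μ) ^ 2 := fun ω => by ring
    simp_rw [this]; exact hYvar i
  -- log term
  have h2δ : (1:ℝ) < 2 / δ := by rw [lt_div_iff₀ hδ0]; linarith
  have hL : 0 < Real.log (2/δ) := Real.log_pos h2δ
  -- key numeric bound
  have hNkey : 4 * c * Real.log (2/δ) * ρ ≤ (N:ℝ) * (ε*μ)^2 := by
    rw [ge_iff_le, div_le_iff₀ (by positivity)] at hNbound
    linarith
  set a := (N:ℝ) * (ε * μ) with hadef
  have hexp : -t * a + N * (c * t ^ 2 * σ2) ≤ -Real.log (2/δ) := by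
    have h1 : c * t * ρ = ε * μ / 2 := by
      rw [htdef]; field_simp
    have h2 : c * t ^ 2 * σ2 ≤ t * (ε * μ / 2) := by
      calc c * t ^ 2 * σ2 ≤ c * t ^ 2 * ρ := by
            nlinarith [mul_le_mul_of_nonneg_left hσρ (by positivity : (0:ℝ) ≤ c * t ^ 2)]
        _ = t * (c * t * ρ) := by ring
        _ = t * (ε * μ / 2) := by rw [h1]
    have hN0 : (0:ℝ) ≤ N := Nat.cast_nonneg N
    have h3 : -t * a + (N:ℝ) * (c * t ^ 2 * σ2) ≤ -((N:ℝ) * (t * (ε * μ)) / 2) := by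
      rw [hadef]; nlinarith [mul_le_mul_of_nonneg_left h2 hN0]
    have h4 : t * (ε * μ) = (ε * μ)^2 / (2 * c * ρ) := by
      rw [htdef]; field_simp
    have h5 : Real.log (2/δ) ≤ (N:ℝ) * (t * (ε * μ)) / 2 := by
      rw [h4, ← mul_div_assoc, div_div, le_div_iff₀ (by positivity)]
      linarith
    linarith
  have hhalf : Real.exp (-Real.log (2/δ)) = δ / 2 := by
    rw [Real.exp_neg, Real.exp_log (by positivity)]
    field_simp
  -- tail bounds
  have htail1 : (P {ω | a ≤ ∑ i, (X i ω - μ)}).toReal ≤ δ / 2 := by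
    have h := tail_le' P (fun i ω => X i ω - μ) (fun i => (hmeas i).sub_const μ)
      hYindep hYbdd hYmean σ2 hYvar ht0.le ht1 a
    refine h.trans ?_
    rw [← hhalf]; exact Real.exp_le_exp.2 hexp
  have htail2 : (P {ω | a ≤ ∑ i, (μ - X i ω)}).toReal ≤ δ / 2 := by
    have h := tail_le' P (fun i ω => μ - X i ω) (fun i => measurable_const.sub (hmeas i))
      hZindep hZbdd hZmean σ2 hZvar ht0.le ht1 a
    refine h.trans ?_
    rw [← hhalf]; exact Real.exp_le_exp.2 hexp
  -- set manipulation
  have hSmeas : Measurable (fun ω => ∑ i, X i ω) :=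
    Finset.measurable_sum Finset.univ (fun i _ => hmeas i)
  have hA : MeasurableSet {ω | μ * (1 - ε) ≤ (∑ i, X i ω) / N ∧
      (∑ i, X i ω) / N ≤ μ * (1 + ε)} := by
    have : {ω | μ * (1 - ε) ≤ (∑ i, X i ω) / N ∧ (∑ i, X i ω) / N ≤ μ * (1 + ε)}
        = {ω | μ * (1 - ε) ≤ (∑ i, X i ω) / N} ∩ {ω | (∑ i, X i ω) / N ≤ μ * (1 + ε)} := rfl
    rw [this]
    exact (measurableSet_le measurable_const (hSmeas.div_const _)).inter
      (measurableSet_le (hSmeas.div_const _) measurable_const)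
  have hNpos : (0:ℝ) < N := Nat.cast_pos.2 hN
  have hsum : ∀ ω, (∑ i, (X i ω - μ)) = (∑ i, X i ω) - N * μ := by
    intro ω
    rw [Finset.sum_sub_distrib, Finset.sum_const, Finset.card_univ, Fintype.card_fin,
      nsmul_eq_mul]
  have hsum' : ∀ ω, (∑ i, (μ - X i ω)) = N * μ - (∑ i, X i ω) := by
    intro ω
    rw [Finset.sum_sub_distrib, Finset.sum_const, Finset.card_univ, Fintype.card_fin,
      nsmul_eq_mul]
  have hsub : {ω | μ * (1 - ε) ≤ (∑ i, X i ω) / N ∧ (∑ i, X i ω) / N ≤ μ * (1 + ε)}ᶜ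
      ⊆ {ω | a ≤ ∑ i, (X i ω - μ)} ∪ {ω | a ≤ ∑ i, (μ - X i ω)} := by
    intro ω hω
    simp only [Set.mem_compl_iff, Set.mem_setOf_eq, not_and_or, not_le] at hω
    rcases hω with h | h
    · right
      rw [Set.mem_setOf_eq, hsum' ω, hadef]
      rw [div_lt_iff₀ hNpos] at h
      nlinarith
    · left
      rw [Set.mem_setOf_eq, hsum ω, hadef]
      rw [lt_div_iff₀ hNpos] at h
      nlinarith
  have hcompl : (P {ω | μ * (1 - ε) ≤ (∑ i, X i ω) / N ∧
      (∑ i, X i ω) / N ≤ μ * (1 + ε)}ᶜ).toReal ≤ δ := by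
    calc (P _ᶜ).toReal
        ≤ (P ({ω | a ≤ ∑ i, (X i ω - μ)} ∪ {ω | a ≤ ∑ i, (μ - X i ω)})).toReal :=
          ENNReal.toReal_mono (measure_ne_top _ _) (measure_mono hsub)
      _ ≤ (P {ω | a ≤ ∑ i, (X i ω - μ)}).toReal + (P {ω | a ≤ ∑ i, (μ - X i ω)}).toReal := by
          rw [← ENNReal.toReal_add (measure_ne_top _ _) (measure_ne_top _ _)]
          exact ENNReal.toReal_mono (by finiteness) (measure_union_le _ _)
      _ ≤ δ / 2 + δ / 2 := add_le_add htail1 htail2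
      _ = δ := by ring
  have hone : (P {ω | μ * (1 - ε) ≤ (∑ i, X i ω) / N ∧ (∑ i, X i ω) / N ≤ μ * (1 + ε)}).toReal
      + (P {ω | μ * (1 - ε) ≤ (∑ i, X i ω) / N ∧ (∑ i, X i ω) / N ≤ μ * (1 + ε)}ᶜ).toReal
      = 1 := by
    rw [← ENNReal.toReal_add (measure_ne_top _ _) (measure_ne_top _ _),
      measure_add_measure_compl hA]
    simp
  linarith
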